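/- Let $h\in(0,1)$, $1<q<\infty$, and for $\alpha\in\mathbb{R}$ let $u_\alpha:[0,1]\to\mathbb{R}$ be the continuous piecewise linear function with $u_\alpha(0)=1$, $u_\alpha(1-h)=\alpha$, $u_\alpha(1)=0$ (linear on $[0,1-h]$ and $[1-h,1]$). If $\alpha^*$ minimizes $\alpha \mapsto \int_0^1 |1-u_\alpha(x)|^q\,dx$, then $\alpha^* > 1$. -/

import Mathlib

open MeasureTheory

/-- Continuous piecewise linear function on the two-element mesh `{(0,1-h),(1-h,1)}`
with nodal values `a` at `0`, `b` at `1-h`, `c` at `1`. -/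
noncomputable def pl2 (h a b c : ℝ) (x : ℝ) : ℝ :=
  if x ≤ 1 - h then a + (b - a) * x / (1 - h)
  else b + (c - b) * (x - (1 - h)) / h

lemma int_affine_rpow (q m k a b : ℝ) (hq : 0 < q) (hm : m ≠ 0) :
    ∫ x in a..b, (m * x + k) ^ q
      = ((m*b+k)^(q+1) - (m*a+k)^(q+1)) / (m*(q+1)) := by
  have hq1 : (0:ℝ) < q + 1 := by linarith
  have hcont : Continuous fun x : ℝ => m * x + k :=
    (continuous_const.mul continuous_id).add continuous_const
  have hint : IntervalIntegrable (fun x => (m*x+k)^q) volume a b := by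
    apply ContinuousOn.intervalIntegrable
    exact hcont.continuousOn.rpow_const fun x hx => Or.inr hq.le
  have hd : ∀ x ∈ Set.uIcc a b,
      HasDerivAt (fun y => (m*y+k)^(q+1) / (m*(q+1))) ((m*x+k)^q) x := by
    intro x hx
    have h1 : HasDerivAt (fun y : ℝ => m * y + k) m x := by
      simpa using ((hasDerivAt_id x).const_mul m).add_const k
    have h2 : HasDerivAt (fun z : ℝ => z ^ (q+1)) ((q+1) * (m*x+k) ^ q) (m*x+k) := by
      have := Real.hasDerivAt_rpow_const (x := m*x+k) (p := q+1) (Or.inr (by linarith))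
      simpa using this
    have h3 := (h2.comp x h1).div_const (m*(q+1))
    rw [show (q+1)*(m*x+k)^q*m/(m*(q+1)) = (m*x+k)^q by
      rw [div_eq_iff (mul_ne_zero hm (ne_of_gt hq1))]; ring] at h3
    exact h3
  rw [intervalIntegral.integral_eq_sub_of_hasDerivAt hd hint]
  ring

lemma pl2_cont (h b : ℝ) (hh1 : h < 1) :
    Continuous (pl2 h 1 b 0) := by
  have hL : (1:ℝ) - h ≠ 0 := by linarith
  apply Continuous.if_le
  · exact (continuous_const.add ((continuous_const.mul continuous_id).div_const _))
  · exact (continuous_const.add ((continuous_const.mul (continuous_id.sub continuous_const)).div_const _))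
  · exact continuous_id
  · exact continuous_const
  · intro x hx
    subst hx
    field_simp
    ring

lemma pl2_right' (h b x : ℝ) (hh0 : 0 < h) (hh1 : h < 1) (hx : 1 - h ≤ x) :
    pl2 h 1 b 0 x = b * (1-x) / h := by
  unfold pl2
  by_cases hc : x ≤ 1 - h
  · have : x = 1 - h := le_antisymm hc hx
    subst this
    rw [if_pos le_rfl]
    have : (1:ℝ) - h ≠ 0 := by linarith
    field_simp
    ring
  · rw [if_neg hc]
    have : h ≠ 0 := by linarith
    field_simp
    ring

lemma Fval (h q e : ℝ) (hh0 : 0 < h) (hh1 : h < 1) (hq : 1 < q) (he : 0 ≤ e) :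
    ∫ x in (0:ℝ)..1, |1 - pl2 h 1 (1+e) 0 x| ^ q
      = (1-h) * e^q / (q+1) + h * (1 + e^(q+1)) / ((1+e)*(q+1)) := by
  have hq0 : (0:ℝ) < q := by linarith
  have hq1 : (0:ℝ) < q + 1 := by linarith
  have hh : h ≠ 0 := by linarith
  have h1e : (0:ℝ) < 1 + e := by linarith
  set L : ℝ := 1 - h with hLdef
  have hL0 : 0 < L := by simp [hLdef]; linarith
  set x₀ : ℝ := 1 - h / (1+e) with hx₀def
  have hLx₀ : L ≤ x₀ := by
    rw [hLdef, hx₀def]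
    have : h / (1+e) ≤ h := by
      rw [div_le_iff₀ h1e]
      nlinarith
    linarith
  have hx₀1 : x₀ ≤ 1 := by
    rw [hx₀def]
    have : 0 < h / (1+e) := div_pos hh0 h1e
    linarith
  have hcont : Continuous fun x => |1 - pl2 h 1 (1+e) 0 x| ^ q :=
    ((continuous_const.sub (pl2_cont h (1+e) hh1)).abs).rpow_const fun x => Or.inr hq0.le
  have hii : ∀ a b : ℝ, IntervalIntegrable (fun x => |1 - pl2 h 1 (1+e) 0 x| ^ q) volume a b :=
    fun a b => hcont.intervalIntegrable a b
  have hsplit : ∫ x in (0:ℝ)..1, |1 - pl2 h 1 (1+e) 0 x| ^ q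
      = (∫ x in (0:ℝ)..L, |1 - pl2 h 1 (1+e) 0 x| ^ q)
        + ((∫ x in L..x₀, |1 - pl2 h 1 (1+e) 0 x| ^ q)
        + (∫ x in x₀..(1:ℝ), |1 - pl2 h 1 (1+e) 0 x| ^ q)) := by
    rw [intervalIntegral.integral_add_adjacent_intervals (hii L x₀) (hii x₀ 1),
        intervalIntegral.integral_add_adjacent_intervals (hii 0 L) (hii L 1)]
  -- piece 1
  have hp1 : (∫ x in (0:ℝ)..L, |1 - pl2 h 1 (1+e) 0 x| ^ q) = (1-h) * e^q / (q+1) := by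
    rcases eq_or_lt_of_le he with he0 | he0
    · have : ∀ x ∈ Set.uIcc (0:ℝ) L, |1 - pl2 h 1 (1+e) 0 x| ^ q = 0 := by
        intro x hx
        rw [Set.uIcc_of_le hL0.le] at hx
        have hxL : x ≤ L := hx.2
        unfold pl2
        rw [if_pos hxL, ← he0]
        simp [Real.zero_rpow (ne_of_gt hq0)]
      rw [intervalIntegral.integral_congr this]
      simp [← he0, Real.zero_rpow (ne_of_gt hq0)]
    · have hEq : ∀ x ∈ Set.uIcc (0:ℝ) L, |1 - pl2 h 1 (1+e) 0 x| ^ q = ((e/L) * x + 0) ^ q := by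
        intro x hx
        rw [Set.uIcc_of_le hL0.le] at hx
        unfold pl2
        rw [if_pos hx.2]
        have hval : 1 - (1 + (1 + e - 1) * x / L) = -(e/L * x + 0) := by
          field_simp
          ring
        have hnn : 0 ≤ e/L * x + 0 := by
          have := mul_nonneg (div_nonneg he0.le hL0.le) hx.1
          linarith
        rw [hval, abs_neg, abs_of_nonneg hnn]
      rw [intervalIntegral.integral_congr hEq,
          int_affine_rpow q (e/L) 0 0 L hq0 (ne_of_gt (div_pos he0 hL0))]
      have h1 : e/L * L + 0 = e := by field_simp; ring
      have h2 : e/L * 0 + 0 = 0 := by ring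
      rw [h1, h2, Real.zero_rpow (by linarith),
          Real.rpow_add' he (by linarith : q + 1 ≠ 0)]
      rw [Real.rpow_one]
      field_simp
      ring
  -- piece 2
  have hp2 : (∫ x in L..x₀, |1 - pl2 h 1 (1+e) 0 x| ^ q)
      = e^(q+1) * h / ((1+e)*(q+1)) := by
    have hEq : ∀ x ∈ Set.uIcc L x₀, |1 - pl2 h 1 (1+e) 0 x| ^ q
        = ((-((1+e)/h)) * x + (1+e-h)/h) ^ q := by
      intro x hx
      rw [Set.uIcc_of_le hLx₀] at hx
      rw [pl2_right' h (1+e) x hh0 hh1 hx.1]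
      have hval : 1 - (1+e) * (1-x) / h = -((-((1+e)/h)) * x + (1+e-h)/h) := by
        field_simp
        ring
      have hnn : 0 ≤ (-((1+e)/h)) * x + (1+e-h)/h := by
        have hrw : (-((1+e)/h)) * x + (1+e-h)/h = ((1+e-h) - (1+e)*x)/h := by ring
        rw [hrw]
        apply div_nonneg _ hh0.le
        have hx2 : x ≤ 1 - h / (1+e) := hx.2
        have : (1+e) * x ≤ (1+e) * (1 - h/(1+e)) :=
          mul_le_mul_of_nonneg_left hx2 h1e.le
        have hexp : (1+e) * (1 - h/(1+e)) = (1+e) - h := by field_simp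
        linarith [hexp ▸ this]
      rw [hval, abs_neg, abs_of_nonneg hnn]
    rw [intervalIntegral.integral_congr hEq,
        int_affine_rpow q (-((1+e)/h)) ((1+e-h)/h) L x₀ hq0
          (by simp; constructor <;> intro hc <;> [linarith; exact hh hc])]
    have hA : (-((1+e)/h)) * x₀ + (1+e-h)/h = 0 := by
      rw [hx₀def]; field_simp; ring
    have hB : (-((1+e)/h)) * L + (1+e-h)/h = e := by
      rw [hLdef]; field_simp; ring
    rw [hA, hB, Real.zero_rpow (by linarith)]
    rw [div_eq_div_iff
      (mul_ne_zero (neg_ne_zero.2 (ne_of_gt (div_pos h1e hh0))) (ne_of_gt hq1))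
      (mul_ne_zero (ne_of_gt h1e) (ne_of_gt hq1))]
    field_simp
    ring
  -- piece 3
  have hp3 : (∫ x in x₀..(1:ℝ), |1 - pl2 h 1 (1+e) 0 x| ^ q)
      = h / ((1+e)*(q+1)) := by
    have hEq : ∀ x ∈ Set.uIcc x₀ (1:ℝ), |1 - pl2 h 1 (1+e) 0 x| ^ q
        = (((1+e)/h) * x + (h-1-e)/h) ^ q := by
      intro x hx
      rw [Set.uIcc_of_le hx₀1] at hx
      rw [pl2_right' h (1+e) x hh0 hh1 (le_trans hLx₀ hx.1)]
      have hval : 1 - (1+e) * (1-x) / h = ((1+e)/h) * x + (h-1-e)/h := by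
        field_simp
        ring
      have hnn : 0 ≤ ((1+e)/h) * x + (h-1-e)/h := by
        have hrw : ((1+e)/h) * x + (h-1-e)/h = ((1+e)*x - (1+e-h))/h := by ring
        rw [hrw]
        apply div_nonneg _ hh0.le
        have hx1 : 1 - h / (1+e) ≤ x := hx.1
        have : (1+e) * (1 - h/(1+e)) ≤ (1+e) * x :=
          mul_le_mul_of_nonneg_left hx1 h1e.le
        have hexp : (1+e) * (1 - h/(1+e)) = (1+e) - h := by field_simp
        linarith [hexp ▸ this]
      rw [hval, abs_of_nonneg hnn]
    rw [intervalIntegral.integral_congr hEq,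
        int_affine_rpow q ((1+e)/h) ((h-1-e)/h) x₀ 1 hq0
          (ne_of_gt (div_pos h1e hh0))]
    have hA : ((1+e)/h) * x₀ + (h-1-e)/h = 0 := by
      rw [hx₀def]; field_simp; ring
    have hB : ((1+e)/h) * 1 + (h-1-e)/h = 1 := by
      field_simp
      ring
    rw [hA, hB, Real.zero_rpow (by linarith), Real.one_rpow]
    field_simp
    norm_num
  rw [hsplit, hp1, hp2, hp3, ← add_div]
  have hnum : e^(q+1)*h + h = h * (1 + e^(q+1)) := by ring
  rw [hnum]

theorem stmt2 (h q : ℝ) (hh0 : 0 < h) (hh1 : h < 1) (hq : 1 < q) (αstar : ℝ)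
    (hmin : ∀ α : ℝ,
      (∫ x in (0:ℝ)..1, |1 - pl2 h 1 αstar 0 x| ^ q) ≤
        ∫ x in (0:ℝ)..1, |1 - pl2 h 1 α 0 x| ^ q) :
    1 < αstar := by
  have hq0 : (0:ℝ) < q := by linarith
  have hq1 : (0:ℝ) < q + 1 := by linarith
  by_contra hle
  push_neg at hle
  -- value at α = 1
  have F1 : (∫ x in (0:ℝ)..1, |1 - pl2 h 1 1 0 x| ^ q) = h / (q+1) := by
    have := Fval h q 0 hh0 hh1 hq le_rfl
    simpa [Real.zero_rpow (ne_of_gt hq0),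
      Real.zero_rpow (show q + 1 ≠ 0 by linarith)] using this
  -- choose ε
  set c : ℝ := min (2*h/3) 1 with hcdef
  have hc0 : 0 < c := lt_min (by linarith) one_pos
  have hcr : 0 < c ^ (1/(q-1)) := Real.rpow_pos_of_pos hc0 _
  set ε : ℝ := min (1/2) (c ^ (1/(q-1)) / 2) with hεdef
  have hε0 : 0 < ε := lt_min (by norm_num) (by positivity)
  have hε2 : ε ≤ 1/2 := min_le_left _ _
  have hεc : ε < c ^ (1/(q-1)) := lt_of_le_of_lt (min_le_right _ _) (by linarith)
  have hq1' : q - 1 ≠ 0 := by linarith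
  have hεq : ε ^ (q-1) < c := by
    have h1 := Real.rpow_lt_rpow hε0.le hεc (by linarith : 0 < q - 1)
    have h2 : (c ^ (1/(q-1))) ^ (q-1) = c := by
      rw [← Real.rpow_mul hc0.le, one_div_mul_cancel hq1', Real.rpow_one]
    rwa [h2] at h1
  have hεh : ε ^ (q-1) < 2*h/3 := lt_of_lt_of_le hεq (min_le_left _ _)
  have hA0 : 0 ≤ ε ^ (q-1) := Real.rpow_nonneg hε0.le _
  -- F(1+ε) < h/(q+1)
  have hFε : (∫ x in (0:ℝ)..1, |1 - pl2 h 1 (1+ε) 0 x| ^ q) < h / (q+1) := by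
    rw [Fval h q ε hh0 hh1 hq hε0.le]
    have hεqv : ε ^ q = ε ^ (q-1) * ε := by
      rw [show q = (q-1) + 1 by ring, Real.rpow_add hε0, Real.rpow_one]
      ring_nf
    have hεq1v : ε ^ (q+1) = ε ^ (q-1) * ε * ε := by
      rw [show q + 1 = (q-1) + 1 + 1 by ring, Real.rpow_add hε0, Real.rpow_add hε0,
          Real.rpow_one]
    set A : ℝ := ε ^ (q-1)
    rw [hεqv, hεq1v]
    have key : A * (1+ε-h) < h := by
      nlinarith [mul_nonneg hA0 (show (0:ℝ) ≤ 3/2 - (1+ε-h) by linarith)]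
    have hD : (0:ℝ) < (1+ε)*(q+1) := by positivity
    rw [div_add_div _ _ (ne_of_gt hq1) (ne_of_gt hD),
        div_lt_div_iff₀ (by positivity) hq1]
    nlinarith [mul_lt_mul_of_pos_right (mul_lt_mul_of_pos_right key hε0)
      (mul_pos hq1 hq1)]
  -- F(1) ≤ F(αstar) by pointwise monotonicity
  have hmono : (∫ x in (0:ℝ)..1, |1 - pl2 h 1 1 0 x| ^ q)
      ≤ ∫ x in (0:ℝ)..1, |1 - pl2 h 1 αstar 0 x| ^ q := by
    apply intervalIntegral.integral_mono_on (by norm_num : (0:ℝ) ≤ 1)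
    · exact (((continuous_const.sub (pl2_cont h 1 hh1)).abs).rpow_const
        fun x => Or.inr hq0.le).intervalIntegrable 0 1
    · exact (((continuous_const.sub (pl2_cont h αstar hh1)).abs).rpow_const
        fun x => Or.inr hq0.le).intervalIntegrable 0 1
    · intro x hx
      by_cases hxL : x ≤ 1 - h
      · have h1 : pl2 h 1 1 0 x = 1 := by
          unfold pl2; rw [if_pos hxL]; ring
        rw [h1]
        simp only [sub_self, abs_zero]
        rw [Real.zero_rpow (ne_of_gt hq0)]
        exact Real.rpow_nonneg (abs_nonneg _) q
      · push_neg at hxL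
        rw [pl2_right' h 1 x hh0 hh1 hxL.le, pl2_right' h αstar x hh0 hh1 hxL.le]
        have hs0 : 0 ≤ (1-x)/h := div_nonneg (by linarith [hx.2]) hh0.le
        have hs1 : (1-x)/h ≤ 1 := by
          rw [div_le_one hh0]; linarith
        have e1 : |1 - 1 * (1-x) / h| = 1 - (1-x)/h := by
          rw [one_mul, abs_of_nonneg (by linarith)]
        have hαs : αstar * (1-x) / h ≤ (1-x)/h := by
          rw [mul_div_assoc]
          nlinarith
        have e2 : |1 - αstar * (1-x) / h| = 1 - αstar * (1-x) / h := by
          rw [abs_of_nonneg (by linarith)]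
        rw [e1, e2]
        apply Real.rpow_le_rpow (by linarith) (by linarith) hq0.le
  have h1 := hmin (1+ε)
  rw [F1] at hmono
  linarith
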